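/- Let C ≥ 0 and let Φ : [0,∞) → (0,∞) be differentiable with Φ(0) > 1 and Φ'(t) ≤ (2/π)(ln max{Φ(t), 1} + C) Φ(t) for all t ≥ 0. Then for all t ≥ 0, Φ(t) ≤ exp( (ln Φ(0)) · e^{ 2t/π + C(1 − e^{−2t/π}) / ln Φ(0) } ); in particular limsup_{t→∞} (ln ln max{Φ(t), e}) / t ≤ 2/π. -/

import Mathlib

open Real Filter Set

noncomputable section

private lemma aux_le_of_pos {a b : ℝ} (h : ∀ ε : ℝ, 0 < ε → a ≤ b + ε) : a ≤ b := by
  by_contra hlt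
  push_neg at hlt
  have := h ((a - b) / 2) (by linarith)
  linarith

theorem statement13 (C : ℝ) (hC : 0 ≤ C) (Φ Φ' : ℝ → ℝ)
    (hΦpos : ∀ t : ℝ, 0 ≤ t → 0 < Φ t)
    (hΦ0 : 1 < Φ 0)
    (hderiv : ∀ t : ℝ, 0 ≤ t → HasDerivWithinAt Φ (Φ' t) (Ici (0 : ℝ)) t)
    (hineq : ∀ t : ℝ, 0 ≤ t →
      Φ' t ≤ (2 / π) * (Real.log (max (Φ t) 1) + C) * Φ t) :
    (∀ t : ℝ, 0 ≤ t →
      Φ t ≤ Real.exp (Real.log (Φ 0) *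
        Real.exp (2 * t / π + C * (1 - Real.exp (-(2 * t / π))) / Real.log (Φ 0))))
    ∧ Filter.limsup (fun t : ℝ => Real.log (Real.log (max (Φ t) (Real.exp 1))) / t) atTop
        ≤ 2 / π := by
  have hπ : 0 < π := Real.pi_pos
  set a : ℝ := 2 / π with ha_def
  have ha : 0 < a := by positivity
  set L0 : ℝ := Real.log (Φ 0) with hL0_def
  have hL0 : 0 < L0 := Real.log_pos hΦ0
  -- continuity of Φ and log ∘ Φ on [0, b]
  have hΦcont : ∀ b : ℝ, ContinuousOn Φ (Icc 0 b) := by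
    intro b s hs
    exact ((hderiv s hs.1).continuousWithinAt).mono (Icc_subset_Ici_self)
  have hfcont : ∀ b : ℝ, ContinuousOn (fun s => Real.log (Φ s)) (Icc 0 b) := by
    intro b
    exact (hΦcont b).log (fun s hs => (hΦpos s hs.1).ne')
  -- derivative of log ∘ Φ
  have hfderiv : ∀ s : ℝ, 0 ≤ s →
      HasDerivWithinAt (fun u => Real.log (Φ u)) ((Φ s)⁻¹ * Φ' s) (Ici s) s := by
    intro s hs
    exact (Real.hasDerivAt_log (hΦpos s hs).ne').comp_hasDerivWithinAt s
      ((hderiv s hs).mono (Ici_subset_Ici.2 hs))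
  -- the key Gronwall comparison with a δ-margin
  have key : ∀ δ : ℝ, 0 < δ → ∀ t : ℝ, 0 ≤ t →
      Real.log (Φ t) ≤ (L0 + C + δ) * Real.exp (a * t) - (C + δ) := by
    intro δ hδ t ht
    set B : ℝ → ℝ := fun s => (L0 + C + δ) * Real.exp (a * s) - (C + δ) with hB_def
    have hB' : ∀ s : ℝ, HasDerivAt B (a * (L0 + C + δ) * Real.exp (a * s)) s := by
      intro s
      have h1 : HasDerivAt (fun u : ℝ => a * u) a s := by
        simpa using (hasDerivAt_id s).const_mul a
      have h2 : HasDerivAt (fun u : ℝ => Real.exp (a * u)) (Real.exp (a * s) * a) s :=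
        (Real.hasDerivAt_exp (a * s)).comp s h1
      have h3 : HasDerivAt (fun u : ℝ => (L0 + C + δ) * Real.exp (a * u))
          ((L0 + C + δ) * (Real.exp (a * s) * a)) s := h2.const_mul _
      have h4 := h3.sub_const (C + δ)
      have e : a * (L0 + C + δ) * Real.exp (a * s) = (L0 + C + δ) * (Real.exp (a * s) * a) := by ring
      rw [e]; exact h4
    have main := image_le_of_deriv_right_lt_deriv_boundary (f := fun s => Real.log (Φ s))
      (f' := fun s => (Φ s)⁻¹ * Φ' s) (a := 0) (b := t)
      (hfcont t) (fun s hs => hfderiv s hs.1)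
      (B := B) (B' := fun s => a * (L0 + C + δ) * Real.exp (a * s))
      (by
        simp only [hB_def, mul_zero, Real.exp_zero, mul_one]
        have : Real.log (Φ 0) = L0 := rfl
        linarith)
      hB'
      ?_ (x := t) ⟨ht, le_refl t⟩
    · exact main
    · -- the touching-point bound
      intro s hs heq0
      have heq : Real.log (Φ s) = B s := heq0
      have hs0 : 0 ≤ s := hs.1
      have hΦs : 0 < Φ s := hΦpos s hs0
      have hBge : L0 ≤ B s := by
        have h1 : (1 : ℝ) ≤ Real.exp (a * s) := by
          rw [← Real.exp_zero]
          exact Real.exp_le_exp.2 (by positivity)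
        have h2 : L0 + C + δ ≤ (L0 + C + δ) * Real.exp (a * s) :=
          le_mul_of_one_le_right (by positivity) h1
        simp only [hB_def]; linarith
      have hlogpos : 0 < Real.log (Φ s) := by
        rw [heq]; exact lt_of_lt_of_le hL0 hBge
      have hΦs1 : 1 ≤ Φ s := by
        by_contra hcon
        push_neg at hcon
        have := Real.log_nonpos (le_of_lt hΦs) (le_of_lt hcon)
        linarith
      have hmax : max (Φ s) 1 = Φ s := max_eq_left hΦs1
      have hΦ'le : Φ' s ≤ a * (Real.log (Φ s) + C) * Φ s := by
        have := hineq s hs0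
        rwa [hmax] at this
      have h5 : (Φ s)⁻¹ * Φ' s ≤ a * (Real.log (Φ s) + C) := by
        have h6 : (Φ s)⁻¹ * Φ' s ≤ (Φ s)⁻¹ * (a * (Real.log (Φ s) + C) * Φ s) :=
          mul_le_mul_of_nonneg_left hΦ'le (by positivity)
        calc (Φ s)⁻¹ * Φ' s ≤ (Φ s)⁻¹ * (a * (Real.log (Φ s) + C) * Φ s) := h6
          _ = a * (Real.log (Φ s) + C) := by field_simp
      have h7 : a * (Real.log (Φ s) + C) < a * (L0 + C + δ) * Real.exp (a * s) := by
        rw [heq]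
        have : a * (B s + C) < a * (B s + C + δ) := by
          apply mul_lt_mul_of_pos_left _ ha
          linarith
        calc a * (B s + C) < a * (B s + C + δ) := this
          _ = a * (L0 + C + δ) * Real.exp (a * s) := by
            simp only [hB_def]; ring
      exact lt_of_le_of_lt h5 h7
  -- remove the δ-margin
  have main : ∀ t : ℝ, 0 ≤ t → Real.log (Φ t) ≤ (L0 + C) * Real.exp (a * t) - C := by
    intro t ht
    apply aux_le_of_pos
    intro ε hε
    have hE : 0 < Real.exp (a * t) := Real.exp_pos _
    have hδ : 0 < ε / Real.exp (a * t) := by positivity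
    have := key (ε / Real.exp (a * t)) hδ t ht
    have hE1 : (1 : ℝ) ≤ Real.exp (a * t) := by
      rw [← Real.exp_zero]; exact Real.exp_le_exp.2 (by positivity)
    have h2 : (ε / Real.exp (a * t)) * Real.exp (a * t) = ε := by field_simp
    nlinarith [this]
  -- Part 1
  have part1 : ∀ t : ℝ, 0 ≤ t →
      Φ t ≤ Real.exp (L0 *
        Real.exp (2 * t / π + C * (1 - Real.exp (-(2 * t / π))) / L0)) := by
    intro t ht
    have hΦt := hΦpos t ht
    have hat : 2 * t / π = a * t := by rw [ha_def]; ring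
    rw [← Real.exp_log hΦt]
    apply Real.exp_le_exp.2
    refine (main t ht).trans ?_
    -- (L0+C) e^{at} - C ≤ L0 * exp(at + C(1-e^{-at})/L0)
    set u : ℝ := C * (1 - Real.exp (-(2 * t / π))) / L0 with hu_def
    have hexpneg : Real.exp (-(2 * t / π)) = (Real.exp (a * t))⁻¹ := by
      rw [hat, Real.exp_neg]
    have hu0 : 0 ≤ u := by
      have : Real.exp (-(2 * t / π)) ≤ 1 := by
        rw [← Real.exp_zero]
        apply Real.exp_le_exp.2
        rw [hat]
        have := mul_nonneg ha.le ht
        linarith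
      apply div_nonneg (mul_nonneg hC (by linarith)) (le_of_lt hL0)
    have h1u : 1 + u ≤ Real.exp u := by
      have := Real.add_one_le_exp u; linarith
    have hE : 0 < Real.exp (a * t) := Real.exp_pos _
    have heq : L0 * (Real.exp (a * t) * (1 + u)) = (L0 + C) * Real.exp (a * t) - C := by
      rw [hu_def, hexpneg]
      field_simp
      ring
    calc (L0 + C) * Real.exp (a * t)- C = L0 * (Real.exp (a * t) * (1 + u)) := heq.symm
      _ ≤ L0 * (Real.exp (a * t) * Real.exp u) := by
          apply mul_le_mul_of_nonneg_left _ (le_of_lt hL0)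
          exact mul_le_mul_of_nonneg_left h1u (le_of_lt hE)
      _ = L0 * Real.exp (2 * t / π + u) := by rw [← Real.exp_add, hat]
  refine ⟨part1, ?_⟩
  -- Part 2
  set f : ℝ → ℝ := fun t => Real.log (Real.log (max (Φ t) (Real.exp 1))) / t with hf_def
  have hLC : 0 < L0 + C := by linarith
  -- f is eventually nonneg, for coboundedness
  have hfge : ∀ t : ℝ, 1 ≤ t → 0 ≤ f t := by
    intro t ht
    have ht0 : (0 : ℝ) < t := by linarith
    have hmax : Real.exp 1 ≤ max (Φ t) (Real.exp 1) := le_max_right _ _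
    have hlog1 : 1 ≤ Real.log (max (Φ t) (Real.exp 1)) := by
      calc (1 : ℝ) = Real.log (Real.exp 1) := (Real.log_exp 1).symm
        _ ≤ _ := Real.log_le_log (Real.exp_pos 1) hmax
    exact div_nonneg (Real.log_nonneg hlog1) (le_of_lt ht0)
  have hcobound : IsCoboundedUnder (· ≤ ·) atTop f :=
    isCoboundedUnder_le_of_eventually_le atTop
      ((eventually_ge_atTop (1:ℝ)).mono (fun t ht => hfge t ht))
  have hbound : ∀ ε : ℝ, 0 < ε → limsup f atTop ≤ 2 / π + ε := by
    intro ε hε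
    apply limsup_le_of_le hcobound
    have hMtend : Tendsto (fun t : ℝ => (L0 + C) * Real.exp (a * t)) atTop atTop := by
      apply Tendsto.const_mul_atTop hLC
      exact Real.tendsto_exp_atTop.comp (Tendsto.const_mul_atTop ha tendsto_id)
    set K : ℝ := max (Real.log (L0 + C)) 0 with hK_def
    have hK0 : 0 ≤ K := le_max_right _ _
    filter_upwards [eventually_ge_atTop (1:ℝ), eventually_ge_atTop (K / ε),
      hMtend.eventually_ge_atTop 1] with t ht1 htK htM
    have ht0 : (0 : ℝ) < t := by linarith
    set M : ℝ := (L0 + C) * Real.exp (a * t) with hM_def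
    have hM1 : 1 ≤ M := htM
    have hM0 : 0 < M := by linarith
    -- log Φ t ≤ M
    have hlogΦ : Real.log (Φ t) ≤ M := by
      have := main t (by linarith : (0:ℝ) ≤ t)
      simp only [hM_def]
      linarith
    have hΦt : 0 < Φ t := hΦpos t (by linarith)
    -- max(Φ t, e) ≤ exp M
    have hmaxle : max (Φ t) (Real.exp 1) ≤ Real.exp M := by
      apply max_le
      · calc Φ t = Real.exp (Real.log (Φ t)) := (Real.exp_log hΦt).symm
          _ ≤ Real.exp M := Real.exp_le_exp.2 hlogΦ
      · exact Real.exp_le_exp.2 hM1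
    have hmaxpos : 0 < max (Φ t) (Real.exp 1) := lt_of_lt_of_le (Real.exp_pos 1) (le_max_right _ _)
    have hlogmax : Real.log (max (Φ t) (Real.exp 1)) ≤ M := by
      calc Real.log (max (Φ t) (Real.exp 1)) ≤ Real.log (Real.exp M) :=
            Real.log_le_log hmaxpos hmaxle
        _ = M := Real.log_exp M
    have hlogmax1 : 1 ≤ Real.log (max (Φ t) (Real.exp 1)) := by
      calc (1 : ℝ) = Real.log (Real.exp 1) := (Real.log_exp 1).symm
        _ ≤ _ := Real.log_le_log (Real.exp_pos 1) (le_max_right _ _)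
    have hloglog : Real.log (Real.log (max (Φ t) (Real.exp 1))) ≤ Real.log M :=
      Real.log_le_log (by linarith) hlogmax
    have hlogM : Real.log M = Real.log (L0 + C) + a * t := by
      rw [hM_def, Real.log_mul (ne_of_gt hLC) (Real.exp_ne_zero _), Real.log_exp]
    have hKt : K / t ≤ ε := by
      rw [div_le_iff₀ ht0]
      calc K ≤ ε * (K / ε) := by rw [mul_div_cancel₀ _ (ne_of_gt hε)]
        _ ≤ ε * t := by apply mul_le_mul_of_nonneg_left htK (le_of_lt hε)
    have : f t ≤ (Real.log (L0 + C) + a * t) / t := by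
      simp only [hf_def]
      gcongr
      rw [← hlogM]; exact hloglog
    calc f t ≤ (Real.log (L0 + C) + a * t) / t := this
      _ = Real.log (L0 + C) / t + a := by field_simp
      _ ≤ K / t + a := by
          have : Real.log (L0 + C) / t ≤ K / t := by
            gcongr
            exact le_max_left _ _
          linarith
      _ ≤ 2 / π + ε := by
          rw [ha_def]
          linarith
  apply aux_le_of_pos
  intro ε hε
  exact hbound ε hε
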